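/- For natural numbers n ≥ 2, if k is a rational number satisfying k^(n-1) = i^(n-1)/n for some nonzero integer i, then n is a perfect (n-1)-th power of a rational, hence n ≤ 2. -/

import Mathlib

theorem stmt_3 (n : ℕ) (hn : 2 ≤ n) (i : ℤ) (hi : i ≠ 0) (k : ℚ)
    (hk : k ^ (n - 1) = (i : ℚ) ^ (n - 1) / (n : ℚ)) :
    (∃ q : ℚ, q ^ (n - 1) = (n : ℚ)) ∧ n ≤ 2 := by
  set m := n - 1 with hm
  have hm1 : 1 ≤ m := by omega
  have hn0 : (n : ℚ) ≠ 0 := by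
    exact_mod_cast (by omega : n ≠ 0)
  have hi0 : (i : ℚ) ≠ 0 := by exact_mod_cast hi
  have hk0 : k ≠ 0 := by
    intro h
    rw [h, zero_pow (by omega : m ≠ 0)] at hk
    have : (i : ℚ) ^ m ≠ 0 := pow_ne_zero _ hi0
    exact this (by field_simp at hk; linarith [hk])
  have hq : ((i : ℚ) / k) ^ m = (n : ℚ) := by
    rw [div_pow, hk]
    field_simp
  refine ⟨⟨_, hq⟩, ?_⟩
  by_contra hle
  push_neg at hle
  set q := (i : ℚ) / k with hqdef
  have hden : q.den = 1 := by
    have h1 : (q ^ m).den = 1 := by rw [hq]; exact Rat.den_natCast n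
    rw [Rat.den_pow] at h1
    by_contra h
    have h2 : 2 ≤ q.den := by
      have := q.pos
      omega
    have : 2 ^ m ≤ q.den ^ m := Nat.pow_le_pow_left h2 m
    have : 2 ^ 1 ≤ 2 ^ m := Nat.pow_le_pow_right (by omega) hm1
    omega
  have hqint : (q.num : ℚ) = q := by
    conv_rhs => rw [← Rat.num_div_den q, hden]
    simp
  have hz : q.num ^ m = (n : ℤ) := by
    have : ((q.num : ℚ)) ^ m = (n : ℚ) := by rw [hqint, hq]
    exact_mod_cast this
  set a := q.num.natAbs with ha
  have hna : a ^ m = n := by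
    have := congrArg Int.natAbs hz
    simpa [Int.natAbs_pow] using this
  have ha2 : 2 ≤ a := by
    by_contra h
    push_neg at h
    have : a ^ m ≤ 1 ^ m := Nat.pow_le_pow_left (by omega) m
    simp at this
    omega
  have h2 : 2 ^ m ≤ a ^ m := Nat.pow_le_pow_left ha2 m
  have h3 : n + 1 ≤ 2 ^ m := by
    have h4 : n - 2 < 2 ^ (n - 2) := Nat.lt_two_pow_self
    have : 2 ^ m = 2 * 2 ^ (n - 2) := by
      rw [hm, show n - 1 = (n - 2) + 1 by omega, pow_succ]; ring
    omega
  omega
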